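/- Let X ∼ μ ∈ 𝒫_{2+ε}(ℝ^d) for some ε > 0, and for (t,θ) ∈ ℝ × S^{d−1} set Z(t,θ) = 1{θᵀX ≤ t} − F_μ(t;θ), where F_μ(t;θ) = μ({x : θᵀx ≤ t}). Then: (a) ‖Z‖_{L¹(λ⊗σ)} ≤ ‖X‖ + 𝔼[‖X‖] almost surely, where λ is Lebesgue measure on ℝ and σ the uniform probability measure on S^{d−1}; and (b) ∫_{S^{d−1}} ∫_ℝ √(F_μ(t;θ)(1 − F_μ(t;θ))) dt dσ(θ) ≤ 2 + 4√K/ε, where K = sup_{θ ∈ S^{d−1}} 𝔼[|θᵀX|^{2+ε}]. -/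

import Mathlib

open MeasureTheory Metric

noncomputable section

variable {d : ℕ}

/-- The uniform probability distribution on the unit sphere of ℝ^d. -/
def unifSphere (d : ℕ) : Measure (sphere (0 : EuclideanSpace ℝ (Fin d)) 1) :=
  ((volume : Measure (EuclideanSpace ℝ (Fin d))).toSphere Set.univ)⁻¹ •
    (volume : Measure (EuclideanSpace ℝ (Fin d))).toSphere

/-- The distribution function of the projection θᵀX for X ∼ μ. -/
def Fproj (μ : Measure (EuclideanSpace ℝ (Fin d)))
    (t : ℝ) (θ : sphere (0 : EuclideanSpace ℝ (Fin d)) 1) : ℝ :=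
  (μ {x | (inner ℝ (θ : EuclideanSpace ℝ (Fin d)) x : ℝ) ≤ t}).toReal

open Set in
lemma my_integral_le_const {α : Type*} [MeasurableSpace α] (ν : Measure α)
    (hν : ν Set.univ ≤ 1) (f : α → ℝ) (C : ℝ) (hC : 0 ≤ C)
    (h0 : ∀ a, 0 ≤ f a) (h : ∀ a, f a ≤ C) : ∫ a, f a ∂ν ≤ C := by
  haveI : IsFiniteMeasure ν := ⟨lt_of_le_of_lt hν ENNReal.one_lt_top⟩
  calc ∫ a, f a ∂ν ≤ ∫ _, C ∂ν :=
        integral_mono_of_nonneg (Filter.Eventually.of_forall h0) (integrable_const C)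
          (Filter.Eventually.of_forall h)
    _ = (ν Set.univ).toReal • C := by rw [integral_const]; rfl
    _ ≤ C := by
        rw [smul_eq_mul]
        nlinarith [ENNReal.toReal_mono ENNReal.one_ne_top hν, ENNReal.toReal_one,
          ENNReal.toReal_nonneg (a := ν Set.univ)]

lemma ennreal_inv_mul_le_one (c : ENNReal) : c⁻¹ * c ≤ 1 := by
  rcases eq_or_ne c 0 with h | h
  · rw [h, mul_zero]; exact zero_le_one
  rcases eq_or_ne c ⊤ with h' | h'
  · rw [h', ENNReal.inv_top, zero_mul]; exact zero_le_one
  · rw [ENNReal.inv_mul_cancel h h']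

lemma unifSphere_univ_le {d : ℕ} : unifSphere d Set.univ ≤ 1 := by
  rw [unifSphere]
  rw [Measure.smul_apply, smul_eq_mul]
  exact ennreal_inv_mul_le_one _

lemma ind_sub_ind_lintegral (s y : ℝ) :
    ∫⁻ t, (‖(if s ≤ t then (1:ℝ) else 0) - (if y ≤ t then (1:ℝ) else 0)‖₊ : ENNReal)
      = ENNReal.ofReal |s - y| := by
  have hpt : ∀ t, (‖(if s ≤ t then (1:ℝ) else 0) - (if y ≤ t then (1:ℝ) else 0)‖₊ : ENNReal)
      = (Set.Ico (min s y) (max s y)).indicator 1 t := by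
    intro t
    by_cases h1 : s ≤ t <;> by_cases h2 : y ≤ t <;>
      simp only [h1, h2, if_true, if_false, ite_true, ite_false, sub_self, sub_zero,
        zero_sub, nnnorm_zero, nnnorm_neg, nnnorm_one, ENNReal.coe_zero, ENNReal.coe_one,
        Set.indicator_apply, Set.mem_Ico, Pi.one_apply]
    · rw [if_neg]; rintro ⟨-, hlt⟩; exact absurd hlt (not_lt.2 (max_le h1 h2))
    · rw [if_pos ⟨(min_le_left s y).trans h1, lt_of_lt_of_le (not_le.1 h2) (le_max_right s y)⟩]
    · rw [if_pos ⟨(min_le_right s y).trans h2, lt_of_lt_of_le (not_le.1 h1) (le_max_left s y)⟩]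
    · rw [if_neg]; rintro ⟨hge, -⟩
      exact absurd hge (not_le.2 (lt_min (not_le.1 h1) (not_le.1 h2)))
  simp_rw [hpt]
  rw [lintegral_indicator_one measurableSet_Ico, Real.volume_Ico, max_sub_min_eq_abs, abs_sub_comm]

lemma partA_inner {E : Type*} [MeasurableSpace E] (μ : Measure E) [IsProbabilityMeasure μ]
    (Y : E → ℝ) (hY : Measurable Y) (hint : Integrable (fun x => |Y x|) μ) (s : ℝ) :
    ∫ t : ℝ, |(if s ≤ t then (1:ℝ) else 0) - (μ {x | Y x ≤ t}).toReal|
      ≤ |s| + ∫ x, |Y x| ∂μ := by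
  set R : ℝ := |s| + ∫ x, |Y x| ∂μ with hR
  have hR0 : 0 ≤ R := add_nonneg (abs_nonneg s) (integral_nonneg fun x => abs_nonneg _)
  set F : ℝ → ℝ := fun t => (μ {x | Y x ≤ t}).toReal with hF
  set Z : ℝ → ℝ := fun t => (if s ≤ t then (1:ℝ) else 0) - F t with hZ
  -- measurability of Z
  have hFmono : Monotone F := by
    intro a b hab
    exact ENNReal.toReal_mono (measure_ne_top μ _)
      (measure_mono fun x hx => le_trans hx hab)
  have hZmeas : Measurable Z := by
    refine Measurable.sub ?_ hFmono.measurable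
    exact Measurable.ite measurableSet_Ici measurable_const measurable_const
  -- pointwise identity
  have hsets : ∀ t : ℝ, MeasurableSet {x | Y x ≤ t} := fun t =>
    measurableSet_le hY measurable_const
  have key1 : ∀ t, Z t = ∫ x, ((if s ≤ t then (1:ℝ) else 0) - (if Y x ≤ t then (1:ℝ) else 0)) ∂μ := by
    intro t
    have hi : Integrable (fun x => (if Y x ≤ t then (1:ℝ) else 0)) μ := by
      have : (fun x => (if Y x ≤ t then (1:ℝ) else 0))
          = Set.indicator {x | Y x ≤ t} (fun _ => (1:ℝ)) := by
        funext x; simp [Set.indicator_apply, Set.mem_setOf_eq]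
      rw [this]
      exact (integrable_const (1:ℝ)).indicator (hsets t)
    rw [integral_sub (integrable_const _) hi, integral_const, probReal_univ]
    have : ∫ x, (if Y x ≤ t then (1:ℝ) else 0) ∂μ = F t := by
      have h2 : (fun x => (if Y x ≤ t then (1:ℝ) else 0))
          = Set.indicator {x | Y x ≤ t} (fun _ => (1:ℝ)) := by
        funext x; simp [Set.indicator_apply, Set.mem_setOf_eq]
      rw [h2, integral_indicator_const (1:ℝ) (hsets t), smul_eq_mul, mul_one]; rfl
    rw [this]; simp [Z]
  -- the lintegral bound
  have hint' : Integrable (fun x => |s - Y x|) μ := by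
    refine Integrable.mono' ((integrable_const |s|).add hint)
      ((hY.const_sub s).abs.aestronglyMeasurable) ?_
    filter_upwards with x
    rw [Real.norm_eq_abs, abs_abs]
    exact abs_sub _ _
  have keymain : ∫⁻ t, (‖Z t‖₊ : ENNReal) ≤ ENNReal.ofReal R := by
    have step1 : ∀ t, (‖Z t‖₊ : ENNReal)
        ≤ ∫⁻ x, (‖(if s ≤ t then (1:ℝ) else 0) - (if Y x ≤ t then (1:ℝ) else 0)‖₊ : ENNReal) ∂μ := by
      intro t
      rw [key1 t]
      exact enorm_integral_le_lintegral_enorm _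
    calc ∫⁻ t, (‖Z t‖₊ : ENNReal)
        ≤ ∫⁻ t, ∫⁻ x, (‖(if s ≤ t then (1:ℝ) else 0) - (if Y x ≤ t then (1:ℝ) else 0)‖₊ : ENNReal) ∂μ :=
          lintegral_mono step1
      _ = ∫⁻ x, (∫⁻ t, (‖(if s ≤ t then (1:ℝ) else 0) - (if Y x ≤ t then (1:ℝ) else 0)‖₊ : ENNReal)) ∂μ := by
          refine lintegral_lintegral_swap ?_
          have m1 : Measurable fun p : ℝ × E => (if s ≤ p.1 then (1:ℝ) else 0) :=
            Measurable.ite (measurableSet_le measurable_const measurable_fst)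
              measurable_const measurable_const
          have m2 : Measurable fun p : ℝ × E => (if Y p.2 ≤ p.1 then (1:ℝ) else 0) :=
            Measurable.ite (measurableSet_le (hY.comp measurable_snd) measurable_fst)
              measurable_const measurable_const
          exact ((m1.sub m2).nnnorm.coe_nnreal_ennreal).aemeasurable
      _ = ∫⁻ x, ENNReal.ofReal |s - Y x| ∂μ := by
          refine lintegral_congr fun x => ?_
          exact ind_sub_ind_lintegral s (Y x)
      _ = ENNReal.ofReal (∫ x, |s - Y x| ∂μ) :=
          (ofReal_integral_eq_lintegral_ofReal hint'
            (Filter.Eventually.of_forall fun x => abs_nonneg _)).symm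
      _ ≤ ENNReal.ofReal R := by
          refine ENNReal.ofReal_le_ofReal ?_
          calc ∫ x, |s - Y x| ∂μ ≤ ∫ x, (|s| + |Y x|) ∂μ :=
                integral_mono hint' ((integrable_const _).add hint) fun x => abs_sub _ _
            _ = R := by rw [integral_add (integrable_const _) hint, integral_const,
                  probReal_univ]; simp [hR]
  -- conclude
  have habs : ∀ t, |Z t| = ‖Z t‖ := fun t => (Real.norm_eq_abs _).symm
  calc ∫ t, |Z t| = (∫⁻ t, ENNReal.ofReal |Z t|).toReal := by
        rw [integral_eq_lintegral_of_nonneg_ae (Filter.Eventually.of_forall fun t => abs_nonneg _)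
          hZmeas.abs.aestronglyMeasurable]
    _ ≤ R := by
        refine ENNReal.toReal_le_of_le_ofReal hR0 ?_
        refine le_trans (le_of_eq ?_) keymain
        refine lintegral_congr fun t => ?_
        rw [habs t]; exact ofReal_norm _

lemma markov_aux {E : Type*} [MeasurableSpace E] (μ : Measure E) [IsProbabilityMeasure μ]
    {Y : E → ℝ} (hY : Measurable Y) {p K : ℝ} (hp : 0 < p) (hK0 : 0 ≤ K)
    (hmom : Integrable (fun x => |Y x| ^ p) μ)
    (hKb : ∫ x, |Y x| ^ p ∂μ ≤ K)
    {a : ℝ} (ha : 0 < a) {S : Set E} (hS : ∀ x ∈ S, a ≤ |Y x|) :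
    (μ S).toReal ≤ K / a ^ p := by
  have hap : (0:ℝ) < a ^ p := Real.rpow_pos_of_pos ha p
  have hlin : ∫⁻ x, ENNReal.ofReal (|Y x| ^ p) ∂μ ≤ ENNReal.ofReal K := by
    rw [← ofReal_integral_eq_lintegral_ofReal hmom
      (Filter.Eventually.of_forall fun x => Real.rpow_nonneg (abs_nonneg _) _)]
    exact ENNReal.ofReal_le_ofReal hKb
  have hsub : S ⊆ {x | ENNReal.ofReal (a ^ p) ≤ ENNReal.ofReal (|Y x| ^ p)} := by
    intro x hx
    exact ENNReal.ofReal_le_ofReal (Real.rpow_le_rpow ha.le (hS x hx) hp.le)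
  have hmark := mul_meas_ge_le_lintegral₀ (μ := μ)
    (f := fun x => ENNReal.ofReal (|Y x| ^ p))
    ((ENNReal.measurable_ofReal.comp ((hY.abs).pow_const p)).aemeasurable)
    (ENNReal.ofReal (a ^ p))
  have h1 : ENNReal.ofReal (a ^ p) * μ S ≤ ENNReal.ofReal K :=
    le_trans (le_trans (mul_le_mul_right (measure_mono hsub) _) hmark) hlin
  have h2 : μ S ≤ ENNReal.ofReal (K / a ^ p) := by
    rw [ENNReal.ofReal_div_of_pos hap]
    rw [ENNReal.le_div_iff_mul_le (Or.inl (by simp [ENNReal.ofReal_eq_zero, not_le, hap]))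
      (Or.inl ENNReal.ofReal_ne_top), mul_comm]
    exact h1
  exact ENNReal.toReal_le_of_le_ofReal (div_nonneg hK0 hap.le) h2

lemma partB_inner {E : Type*} [MeasurableSpace E] (μ : Measure E) [IsProbabilityMeasure μ]
    {Y : E → ℝ} (hY : Measurable Y) {ε K : ℝ} (hε : 0 < ε) (hK0 : 0 ≤ K)
    (hmom : Integrable (fun x => |Y x| ^ (2 + ε)) μ)
    (hKb : ∫ x, |Y x| ^ (2 + ε) ∂μ ≤ K) :
    ∫ t : ℝ, Real.sqrt ((μ {x | Y x ≤ t}).toReal * (1 - (μ {x | Y x ≤ t}).toReal))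
      ≤ 2 + 4 * Real.sqrt K / ε := by
  set F : ℝ → ℝ := fun t => (μ {x | Y x ≤ t}).toReal with hF
  have hF0 : ∀ t, 0 ≤ F t := fun t => ENNReal.toReal_nonneg
  have hF1 : ∀ t, F t ≤ 1 := fun t => by
    simpa using ENNReal.toReal_mono (by simp) (prob_le_one (μ := μ) (s := {x | Y x ≤ t}))
  set q : ℝ := -1 - ε / 2 with hq
  have hqlt : q < -1 := by rw [hq]; linarith
  have hsK := Real.sqrt_nonneg K
  -- the dominating functions
  set g₁ : ℝ → ℝ := Set.indicator (Set.Icc (-1:ℝ) 1) (fun _ => (1:ℝ)) with hg₁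
  set g₂ : ℝ → ℝ := Set.indicator (Set.Ioi (1:ℝ)) (fun t => Real.sqrt K * t ^ q) with hg₂
  set g₃ : ℝ → ℝ := Set.indicator (Set.Iio (-1:ℝ)) (fun t => Real.sqrt K * (-t) ^ q) with hg₃
  have hg₁nn : ∀ t, 0 ≤ g₁ t := fun t => Set.indicator_nonneg (fun _ _ => zero_le_one) t
  have hg₂nn : ∀ t, 0 ≤ g₂ t := fun t => Set.indicator_nonneg
    (fun u hu => mul_nonneg hsK (Real.rpow_nonneg (by simpa using (zero_lt_one.trans hu).le) _)) t
  have hg₃nn : ∀ t, 0 ≤ g₃ t := fun t => Set.indicator_nonneg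
    (fun u hu => mul_nonneg hsK (Real.rpow_nonneg (by simp at hu; linarith) _)) t
  -- tail bounds
  have hsqrt_tail : ∀ a : ℝ, 1 < a → ∀ b : ℝ, 0 ≤ b → b ≤ K / a ^ (2 + ε) →
      Real.sqrt b ≤ Real.sqrt K * a ^ q := by
    intro a ha b hb hbK
    have ha0 : (0:ℝ) < a := lt_trans zero_lt_one ha
    have : Real.sqrt b ≤ Real.sqrt (K / a ^ (2 + ε)) := Real.sqrt_le_sqrt hbK
    refine le_trans this (le_of_eq ?_)
    rw [Real.sqrt_div hK0, Real.sqrt_eq_rpow (a ^ (2+ε)), ← Real.rpow_mul ha0.le,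
      div_eq_mul_inv, ← Real.rpow_neg ha0.le]
    congr 1
    rw [hq]; ring
  -- pointwise domination
  have hdom : ∀ t, Real.sqrt (F t * (1 - F t)) ≤ g₁ t + g₂ t + g₃ t := by
    intro t
    rcases lt_or_ge 1 t with h | h
    · have h1F : 1 - F t ≤ K / t ^ (2 + ε) := by
        have hcompl : 1 - F t = (μ {x | Y x ≤ t}ᶜ).toReal := by
          rw [measure_compl (measurableSet_le hY measurable_const) (measure_ne_top μ _),
            measure_univ, ENNReal.toReal_sub_of_le prob_le_one (by simp)]
          simp [hF]
        rw [hcompl]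
        exact markov_aux μ hY (by linarith : (0:ℝ) < 2 + ε) hK0 hmom hKb
          (lt_trans zero_lt_one h)
          (fun x hx => by
            have hx' : ¬ (Y x ≤ t) := hx
            exact le_trans (not_le.1 hx').le (le_abs_self _))
      calc Real.sqrt (F t * (1 - F t)) ≤ Real.sqrt (1 - F t) :=
            Real.sqrt_le_sqrt (by nlinarith [hF0 t, hF1 t])
        _ ≤ Real.sqrt K * t ^ q := hsqrt_tail t h _ (by linarith [hF1 t]) h1F
        _ = g₂ t := by rw [hg₂, Set.indicator_of_mem (Set.mem_Ioi.2 h)]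
        _ ≤ g₁ t + g₂ t + g₃ t := by linarith [hg₁nn t, hg₃nn t]
    rcases lt_or_ge t (-1) with h' | h'
    · have hFt : F t ≤ K / (-t) ^ (2 + ε) := by
        refine markov_aux μ hY (by linarith : (0:ℝ) < 2 + ε) hK0 hmom hKb
          (a := -t) (by linarith) (fun x hx => ?_)
        have hx' : Y x ≤ t := hx
        exact le_trans (neg_le_neg hx') (neg_le_abs _)
      calc Real.sqrt (F t * (1 - F t)) ≤ Real.sqrt (F t) :=
            Real.sqrt_le_sqrt (by nlinarith [hF0 t, hF1 t])
        _ ≤ Real.sqrt K * (-t) ^ q := hsqrt_tail (-t) (by linarith) _ (hF0 t) hFt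
        _ = g₃ t := by rw [hg₃, Set.indicator_of_mem (Set.mem_Iio.2 h')]
        _ ≤ g₁ t + g₂ t + g₃ t := by linarith [hg₁nn t, hg₂nn t]
    · have h1 : Real.sqrt (F t * (1 - F t)) ≤ 1 :=
        Real.sqrt_le_one.mpr (by nlinarith [hF0 t, hF1 t])
      have : g₁ t = 1 := Set.indicator_of_mem (Set.mem_Icc.2 ⟨h', h⟩) _
      linarith [hg₂nn t, hg₃nn t]
  -- integrability
  have hi₂' : IntegrableOn (fun t => Real.sqrt K * t ^ q) (Set.Ioi (1:ℝ)) :=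
    (integrableOn_Ioi_rpow_of_lt hqlt one_pos).const_mul _
  have hi₂ : Integrable g₂ := hi₂'.integrable_indicator measurableSet_Ioi
  have hA : MeasurableEmbedding (fun x : ℝ => -x) :=
    (Homeomorph.neg ℝ).isClosedEmbedding.measurableEmbedding
  have hpre : (fun x : ℝ => -x) ⁻¹' (Set.Ioi (1:ℝ)) = Set.Iio (-1:ℝ) := by
    ext x; simp only [Set.mem_preimage, Set.mem_Ioi, Set.mem_Iio]
    constructor <;> intro <;> linarith
  have hi₃' : IntegrableOn (fun t => Real.sqrt K * (-t) ^ q) (Set.Iio (-1:ℝ)) := by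
    have hmap : IntegrableOn (fun u => Real.sqrt K * u ^ q) (Set.Ioi (1:ℝ))
        (Measure.map (fun x : ℝ => -x) volume) := by
      rw [Measure.map_neg_eq_self]; exact hi₂'
    have := hA.integrableOn_map_iff.mp hmap
    rwa [hpre] at this
  have hi₃ : Integrable g₃ := hi₃'.integrable_indicator measurableSet_Iio
  have hi₁ : Integrable g₁ := by
    refine IntegrableOn.integrable_indicator ?_ measurableSet_Icc
    exact integrableOn_const (by rw [Real.volume_Icc]; exact ENNReal.ofReal_ne_top)
  have hig : Integrable (fun t => g₁ t + g₂ t + g₃ t) := (hi₁.add hi₂).add hi₃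
  -- integral values
  have hv₁ : ∫ t, g₁ t = 2 := by
    rw [hg₁, integral_indicator_const (1:ℝ) measurableSet_Icc, smul_eq_mul, mul_one,
      Real.volume_real_Icc]
    norm_num
  have hIoi : ∫ t in Set.Ioi (1:ℝ), t ^ q = 2 / ε := by
    rw [integral_Ioi_rpow_of_lt hqlt one_pos, Real.one_rpow, hq,
      show (-1:ℝ) - ε / 2 + 1 = -(ε / 2) by ring, neg_div_neg_eq, one_div_div]
  have hv₂ : ∫ t, g₂ t = Real.sqrt K * (2 / ε) := by
    rw [hg₂, integral_indicator measurableSet_Ioi, integral_const_mul, hIoi]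
  have hv₃ : ∫ t, g₃ t = Real.sqrt K * (2 / ε) := by
    rw [hg₃, integral_indicator measurableSet_Iio]
    calc ∫ t in Set.Iio (-1:ℝ), Real.sqrt K * (-t) ^ q
        = ∫ t in Set.Iic (-1:ℝ), Real.sqrt K * (-t) ^ q :=
          setIntegral_congr_set Iio_ae_eq_Iic
      _ = ∫ u in Set.Ioi (-(-1:ℝ)), Real.sqrt K * u ^ q :=
          integral_comp_neg_Iic (-1) (fun u => Real.sqrt K * u ^ q)
      _ = Real.sqrt K * (2 / ε) := by rw [neg_neg, integral_const_mul, hIoi]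
  calc ∫ t : ℝ, Real.sqrt (F t * (1 - F t))
      ≤ ∫ t, (g₁ t + g₂ t + g₃ t) :=
        integral_mono_of_nonneg (Filter.Eventually.of_forall fun t => Real.sqrt_nonneg _)
          hig (Filter.Eventually.of_forall hdom)
    _ = 2 + Real.sqrt K * (2 / ε) + Real.sqrt K * (2 / ε) := by
        have h12 : Integrable (fun t => g₁ t + g₂ t) volume := hi₁.add hi₂
        rw [integral_add h12 hi₃, integral_add hi₁ hi₂, hv₁, hv₂, hv₃]
    _ = 2 + 4 * Real.sqrt K / ε := by ring

/-- For X ∼ μ ∈ 𝒫_{2+ε}(ℝ^d) and Z(t,θ) = 1{θᵀX ≤ t} − F_μ(t;θ):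
(a) ‖Z‖_{L¹(λ⊗σ)} ≤ ‖X‖ + 𝔼‖X‖ pointwise in X; and
(b) ∫∫ √(F_μ(1−F_μ)) dt dσ ≤ 2 + 4√K/ε where K bounds sup_θ 𝔼|θᵀX|^{2+ε}. -/
theorem stmt17 (ε : ℝ) (hε : 0 < ε)
    (μ : Measure (EuclideanSpace ℝ (Fin d))) [IsProbabilityMeasure μ]
    (hmom : Integrable (fun x => ‖x‖ ^ (2 + ε)) μ)
    (K : ℝ) (hK0 : 0 ≤ K)
    (hK : ∀ θ : sphere (0 : EuclideanSpace ℝ (Fin d)) 1,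
      ∫ x, |(inner ℝ (θ : EuclideanSpace ℝ (Fin d)) x : ℝ)| ^ (2 + ε) ∂μ ≤ K) :
    (∀ x₀ : EuclideanSpace ℝ (Fin d),
      ∫ θ : sphere (0 : EuclideanSpace ℝ (Fin d)) 1,
        (∫ t : ℝ, |(if (inner ℝ (θ : EuclideanSpace ℝ (Fin d)) x₀ : ℝ) ≤ t
            then (1 : ℝ) else 0) - Fproj μ t θ|) ∂(unifSphere d)
        ≤ ‖x₀‖ + ∫ x, ‖x‖ ∂μ) ∧
    ∫ θ : sphere (0 : EuclideanSpace ℝ (Fin d)) 1,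
        (∫ t : ℝ, Real.sqrt (Fproj μ t θ * (1 - Fproj μ t θ))) ∂(unifSphere d)
      ≤ 2 + 4 * Real.sqrt K / ε := by
  classical
  have hnormint : Integrable (fun x : EuclideanSpace ℝ (Fin d) => ‖x‖) μ := by
    refine Integrable.mono' ((integrable_const (1:ℝ)).add hmom)
      continuous_norm.measurable.aestronglyMeasurable ?_
    filter_upwards with x
    rw [Real.norm_eq_abs, abs_of_nonneg (norm_nonneg x)]
    show ‖x‖ ≤ 1 + ‖x‖ ^ (2 + ε)
    rcases le_total ‖x‖ 1 with h | h
    · have h2 : (0:ℝ) ≤ ‖x‖ ^ (2 + ε) := Real.rpow_nonneg (norm_nonneg x) _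
      linarith
    · have h3 : ‖x‖ ≤ ‖x‖ ^ (2 + ε) := by
        nth_rewrite 1 [← Real.rpow_one ‖x‖]
        exact Real.rpow_le_rpow_of_exponent_le h (by linarith)
      linarith
  have hsphere : ∀ θ : Metric.sphere (0 : EuclideanSpace ℝ (Fin d)) 1, ‖(θ : EuclideanSpace ℝ (Fin d))‖ = 1 := fun θ =>
    norm_eq_of_mem_sphere θ
  have hYc : ∀ θ : Metric.sphere (0 : EuclideanSpace ℝ (Fin d)) 1,
      Continuous fun x : EuclideanSpace ℝ (Fin d) => (inner ℝ (θ : EuclideanSpace ℝ (Fin d)) x : ℝ) :=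
    fun θ => continuous_const.inner continuous_id
  have hYb : ∀ (θ : Metric.sphere (0 : EuclideanSpace ℝ (Fin d)) 1) (x : EuclideanSpace ℝ (Fin d)),
      |(inner ℝ (θ : EuclideanSpace ℝ (Fin d)) x : ℝ)| ≤ ‖x‖ := by
    intro θ x
    calc |(inner ℝ (θ : EuclideanSpace ℝ (Fin d)) x : ℝ)| ≤ ‖(θ : EuclideanSpace ℝ (Fin d))‖ * ‖x‖ := abs_real_inner_le_norm _ _
      _ = ‖x‖ := by rw [hsphere θ, one_mul]
  have hYint : ∀ θ : Metric.sphere (0 : EuclideanSpace ℝ (Fin d)) 1,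
      Integrable (fun x => |(inner ℝ (θ : EuclideanSpace ℝ (Fin d)) x : ℝ)|) μ := by
    intro θ
    refine hnormint.mono' ((hYc θ).abs.measurable.aestronglyMeasurable) ?_
    filter_upwards with x
    rw [Real.norm_eq_abs, abs_abs]
    exact hYb θ x
  have hmomY : ∀ θ : Metric.sphere (0 : EuclideanSpace ℝ (Fin d)) 1,
      Integrable (fun x => |(inner ℝ (θ : EuclideanSpace ℝ (Fin d)) x : ℝ)| ^ (2 + ε)) μ := by
    intro θ
    refine hmom.mono' ?_ ?_
    · exact (((hYc θ).abs.rpow_const (fun x => Or.inr (by linarith))).measurable).aestronglyMeasurable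
    · filter_upwards with x
      rw [Real.norm_eq_abs, abs_of_nonneg (Real.rpow_nonneg (abs_nonneg _) _)]
      exact Real.rpow_le_rpow (abs_nonneg _) (hYb θ x) (by linarith)
  constructor
  · intro x₀
    refine my_integral_le_const (unifSphere d) unifSphere_univ_le _ _
      (add_nonneg (norm_nonneg _) (integral_nonneg fun x => norm_nonneg x)) ?_ ?_
    · intro θ
      exact integral_nonneg fun t => abs_nonneg _
    · intro θ
      have h1 := partA_inner μ (fun x => (inner ℝ (θ : EuclideanSpace ℝ (Fin d)) x : ℝ)) (hYc θ).measurable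
        (hYint θ) (inner ℝ (θ : EuclideanSpace ℝ (Fin d)) x₀ : ℝ)
      refine le_trans h1 (add_le_add (hYb θ x₀) ?_)
      exact integral_mono (hYint θ) hnormint fun x => hYb θ x
  · refine my_integral_le_const (unifSphere d) unifSphere_univ_le _ _ (by positivity) ?_ ?_
    · intro θ
      exact integral_nonneg fun t => Real.sqrt_nonneg _
    · intro θ
      exact partB_inner μ (hYc θ).measurable hε hK0 (hmomY θ) (hK θ)
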